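/- For every n ≥ 1, the last element that n jumps over satisfies t(n) = ⌊(n+1)φ⌋ − 1. -/

import Mathlib

/-- The golden ratio `(1 + √5)/2`. -/
noncomputable def phi : ℝ := (1 + Real.sqrt 5) / 2

/-- The Hurt-Sada array `A : ℕ → ℕ → ℕ`.  Row `0` is the identity sequence;
row `n+1` is obtained from row `n` by moving the entry `n+1` (located at the unique
position `p` with `A n p = n+1`) by `n+1` places to the right, shifting the jumped-over
entries one place left. -/
noncomputable def A : ℕ → ℕ → ℕ
  | 0, k => k
  | n + 1, j =>
    let p := sInf {i | A n i = n + 1}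
    if j < p then A n j
    else if j < p + (n + 1) then A n (j + 1)
    else if j = p + (n + 1) then n + 1
    else A n j

/-- `p n` is the (unique) position of `n` in row `n-1` of the Hurt-Sada array. -/
noncomputable def p (n : ℕ) : ℕ := sInf {i | A (n - 1) i = n}

/-- `t n` is the last element that `n` jumps over. -/
noncomputable def t (n : ℕ) : ℕ := A (n - 1) (p n + n)


namespace HS

lemma phi_eq : phi = Real.goldenRatio := rfl
lemma phi_sq : phi ^ 2 = phi + 1 := by rw [phi_eq]; exact Real.goldenRatio_sq
lemma one_lt_phi : 1 < phi := by rw [phi_eq]; exact Real.one_lt_goldenRatio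
lemma phi_lt_two : phi < 2 := by rw [phi_eq]; exact Real.goldenRatio_lt_two
lemma phi_pos : 0 < phi := by rw [phi_eq]; exact Real.goldenRatio_pos
lemma phi_irr : Irrational phi := by rw [phi_eq]; exact Real.goldenRatio_irrational
lemma phi_gt : (3:ℝ)/2 < phi := by nlinarith [phi_sq, one_lt_phi]
lemma phi_lt : phi < (5:ℝ)/3 := by nlinarith [phi_sq, one_lt_phi]
lemma phi_cub : phi ^ 3 = 2 * phi + 1 := by nlinarith [phi_sq]

/-- `fl m = ⌊m φ⌋`. -/
noncomputable def fl (m : ℕ) : ℕ := ⌊(m : ℝ) * phi⌋₊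

lemma fl_le (m : ℕ) : (fl m : ℝ) ≤ m * phi :=
  Nat.floor_le (mul_nonneg (Nat.cast_nonneg _) phi_pos.le)

lemma lt_fl_add_one (m : ℕ) : (m:ℝ) * phi < fl m + 1 :=
  Nat.lt_floor_add_one _

lemma irr_mphi (m : ℕ) (hm : 1 ≤ m) : Irrational ((m:ℝ) * phi) :=
  phi_irr.natCast_mul (by omega)

lemma fl_lt (m : ℕ) (hm : 1 ≤ m) : (fl m : ℝ) < m * phi :=
  lt_of_le_of_ne (fl_le m) fun h => (irr_mphi m hm).ne_nat (fl m) h.symm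

lemma fl_add_one_le (m : ℕ) : fl m + 1 ≤ fl (m + 1) := by
  have h : ((fl m + 1 : ℕ) : ℝ) ≤ ((m+1:ℕ):ℝ) * phi := by
    push_cast
    nlinarith [fl_le m, one_lt_phi]
  exact Nat.le_floor h

lemma fl_le_add_two (m : ℕ) : fl (m + 1) ≤ fl m + 2 := by
  have h : ((m+1:ℕ):ℝ) * phi < ((fl m + 3 : ℕ) : ℝ) := by
    push_cast
    nlinarith [lt_fl_add_one m, phi_lt_two]
  have h2 : fl (m+1) < fl m + 3 :=
    Nat.floor_lt (mul_nonneg (Nat.cast_nonneg _) phi_pos.le) |>.mpr h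
  omega

lemma fl_lb (m : ℕ) (hm : 2 ≤ m) : m + 1 ≤ fl m := by
  have hm' : (2:ℝ) ≤ (m:ℝ) := by exact_mod_cast hm
  have h : ((m + 1 : ℕ) : ℝ) ≤ (m:ℝ) * phi := by
    push_cast
    nlinarith [phi_gt, hm']
  exact Nat.le_floor h

lemma fl_ub (m : ℕ) (hm : 1 ≤ m) : fl m < 2 * m := by
  have hm' : (1:ℝ) ≤ (m:ℝ) := by exact_mod_cast hm
  have h : (m:ℝ) * phi < ((2 * m : ℕ) : ℝ) := by push_cast; nlinarith [phi_lt_two, hm']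
  exact Nat.floor_lt (mul_nonneg (Nat.cast_nonneg _) phi_pos.le) |>.mpr h

lemma fl_one : fl 1 = 1 := by
  have : (⌊(1:ℝ) * phi⌋₊) = 1 := by
    rw [Nat.floor_eq_iff (by nlinarith [phi_pos])]
    constructor
    · push_cast; nlinarith [one_lt_phi]
    · push_cast; nlinarith [phi_lt_two]
  simpa [fl] using this

lemma fl_two : fl 2 = 3 := by
  have : (⌊(2:ℝ) * phi⌋₊) = 3 := by
    rw [Nat.floor_eq_iff (by nlinarith [phi_pos])]
    constructor
    · push_cast; nlinarith [phi_gt]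
    · push_cast; nlinarith [phi_lt_two]
  simpa [fl] using this

lemma fl_three : fl 3 = 4 := by
  have : (⌊(3:ℝ) * phi⌋₊) = 4 := by
    rw [Nat.floor_eq_iff (by nlinarith [phi_pos])]
    constructor
    · push_cast; nlinarith [phi_gt]
    · push_cast; nlinarith [phi_lt]
  simpa [fl] using this

lemma fl_mono : StrictMono fl :=
  strictMono_nat_of_lt_succ fun m => by have := fl_add_one_le m; omega

/-- Beatty disjointness for φ and φ². -/
lemma beatty_disj (a b : ℕ) (ha : 1 ≤ a) (hb : 1 ≤ b) : fl a ≠ b + fl b := by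
  intro h
  have h1 : (fl a : ℝ) < a * phi := fl_lt a ha
  have h2 : (a:ℝ) * phi < fl a + 1 := lt_fl_add_one a
  have h3 : (fl b : ℝ) < b * phi := fl_lt b hb
  have h4 : (b:ℝ) * phi < fl b + 1 := lt_fl_add_one b
  have hc : (fl a : ℝ) = (b:ℝ) + (fl b : ℝ) := by exact_mod_cast congrArg (Nat.cast : ℕ → ℝ) h
  -- N < aφ  ⇒  N(φ-1) < a ;  aφ < N+1 ⇒ a < (N+1)(φ-1)
  have k1 : (fl a : ℝ) * (phi - 1) < a := by
    nlinarith [mul_lt_mul_of_pos_right h1 (by nlinarith [one_lt_phi] : (0:ℝ) < phi - 1), phi_sq]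
  have k2 : (a:ℝ) < ((fl a : ℝ) + 1) * (phi - 1) := by
    nlinarith [mul_lt_mul_of_pos_right h2 (by nlinarith [one_lt_phi] : (0:ℝ) < phi - 1), phi_sq]
  -- N < bφ² ⇒ N(2-φ) < b ; bφ² < N+1 ⇒ b < (N+1)(2-φ)
  have k3 : (fl a : ℝ) * (2 - phi) < b := by
    nlinarith [mul_lt_mul_of_pos_right h3 (by nlinarith [phi_lt_two] : (0:ℝ) < 2 - phi), phi_sq]
  have k4 : (b:ℝ) < ((fl a:ℝ) + 1) * (2 - phi) := by
    nlinarith [mul_lt_mul_of_pos_right h4 (by nlinarith [phi_lt_two] : (0:ℝ) < 2 - phi), phi_sq]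
  have c1 : (fl a : ℝ) < (a:ℝ) + b := by nlinarith
  have c2 : (a:ℝ) + b < (fl a : ℝ) + 1 := by nlinarith
  have c1' : fl a < a + b := by exact_mod_cast c1
  have c2' : a + b < fl a + 1 := by exact_mod_cast c2
  omega

/-- Beatty surjectivity for φ and φ². -/
lemma beatty_surj (N : ℕ) (hN : 1 ≤ N) :
    (∃ m, 1 ≤ m ∧ fl m = N) ∨ (∃ m, 1 ≤ m ∧ m + fl m = N) := by
  have hN' : (1:ℝ) ≤ (N:ℝ) := by exact_mod_cast hN
  set a := ⌊(N:ℝ) * (phi - 1)⌋₊ with ha_def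
  set b := ⌊(N:ℝ) * (2 - phi)⌋₊ with hb_def
  have hia : Irrational ((N:ℝ) * (phi - 1)) := by
    have : (N:ℝ) * (phi - 1) = (N:ℝ) * phi - N := by ring
    rw [this]; exact (irr_mphi N hN).sub_natCast N
  have hib : Irrational ((N:ℝ) * (2 - phi)) := by
    have : (N:ℝ) * (2 - phi) = (2*N : ℕ) - (N:ℝ) * phi := by push_cast; ring
    rw [this]; exact ((irr_mphi N hN)).natCast_sub (2*N)
  have ha1 : (a:ℝ) < (N:ℝ) * (phi - 1) :=
    lt_of_le_of_ne (Nat.floor_le (by nlinarith [one_lt_phi])) fun h => hia.ne_nat a h.symm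
  have ha2 : (N:ℝ) * (phi - 1) < a + 1 := Nat.lt_floor_add_one _
  have hb1 : (b:ℝ) < (N:ℝ) * (2 - phi) :=
    lt_of_le_of_ne (Nat.floor_le (by nlinarith [phi_lt_two])) fun h => hib.ne_nat b h.symm
  have hb2 : (N:ℝ) * (2 - phi) < b + 1 := Nat.lt_floor_add_one _
  have hab : a + b + 1 = N := by
    have c1 : (a:ℝ) + b < N := by nlinarith
    have c2 : (N:ℝ) < a + b + 2 := by nlinarith
    have c1' : a + b < N := by exact_mod_cast c1
    have c2' : N < a + b + 2 := by exact_mod_cast c2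
    omega
  by_cases hc : ((a:ℝ) + 1) * phi < N + 1
  · left
    refine ⟨a + 1, by omega, ?_⟩
    have hlow : ((N:ℕ):ℝ) ≤ ((a+1:ℕ):ℝ) * phi := by
      push_cast
      nlinarith [mul_lt_mul_of_pos_right ha1 phi_pos, phi_sq, phi_pos]
    rw [fl, Nat.floor_eq_iff (mul_nonneg (Nat.cast_nonneg _) phi_pos.le)]
    constructor
    · exact hlow
    · push_cast at hc ⊢; linarith
  · right
    push_neg at hc
    refine ⟨b + 1, by omega, ?_⟩
    have hNr : (N:ℝ) = a + b + 1 := by exact_mod_cast hab.symm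
    -- show fl (b+1) = a, then (b+1) + a = N
    have key : fl (b + 1) = a := by
      -- a ≤ (b+1)φ < a+1 :  from N ≤ (b+1)φ² < N+1 and N = a+b+1
      have hup : ((b:ℝ) + 1) * phi < a + 1 := by
        -- (b+1)φ² < N+1 : b+1 ≤ (N+1)(2-φ);  from hc : a+1 ≥ (N+1)(φ-1)
        -- hc: (a+1)φ ≥ N+1 ⇒ (a+1) ≥ (N+1)(φ-1), strict since irrational? use ≥ then strict by b bound
        -- (b+1)φ² < a+1+bφ+... do directly: want (b+1)φ < a+1, i.e. (b+1)φ - b - 1 + b + 1 < a+1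
        -- equivalent (b+1)φ² < N+1 with N = a+b+1:  (b+1)φ + (b+1) < a+b+2
        -- from hc :  N+1 ≤ (a+1)φ  ⇒ (N+1)(φ-1) ≤ a+1
        have step : ((N:ℝ) + 1) * (phi - 1) ≤ (a:ℝ) + 1 := by
          nlinarith [mul_le_mul_of_nonneg_right hc (by nlinarith [one_lt_phi] : (0:ℝ) ≤ phi - 1), phi_sq]
        -- b+1 = N+1-(a+1) ≤ (N+1)(2-φ) ⇒ (b+1)φ² ≤ N+1; strictness via hb1 route instead:
        have hbb : (b:ℝ) + 1 ≤ ((N:ℝ) + 1) * (2 - phi) := by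
          have hNr : (N:ℝ) = a + b + 1 := by exact_mod_cast hab.symm
          nlinarith [step]
        -- (b+1)φ² ≤ N+1, and irrationality gives strict on (b+1)φ :
        have h2' : ((b:ℝ)+1) * phi + ((b:ℝ)+1) ≤ (N:ℝ) + 1 := by
          nlinarith [mul_le_mul_of_nonneg_right hbb (by nlinarith [phi_pos] : (0:ℝ) ≤ phi^2), phi_sq,
            mul_le_mul_of_nonneg_right hbb phi_pos.le]
        have hNr : (N:ℝ) = a + b + 1 := by exact_mod_cast hab.symm
        have hne : ((b:ℝ)+1) * phi ≠ (a:ℝ) + 1 := by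
          have : Irrational (((b+1:ℕ):ℝ) * phi) := irr_mphi (b+1) (by omega)
          intro h
          exact this.ne_nat (a+1) (by push_cast at h ⊢; linarith [h])
        have : ((b:ℝ)+1) * phi ≤ (a:ℝ) + 1 := by linarith [h2', hNr.ge]
        exact lt_of_le_of_ne this hne
      have hlow : ((a:ℕ):ℝ) ≤ ((b+1:ℕ):ℝ) * phi := by
        push_cast
        nlinarith [mul_lt_mul_of_pos_right hb2 (by nlinarith [phi_pos, one_lt_phi] : (0:ℝ) < phi^2), phi_sq, phi_cub, hNr]
      rw [fl, Nat.floor_eq_iff (mul_nonneg (Nat.cast_nonneg _) phi_pos.le)]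
      exact ⟨hlow, by push_cast; linarith⟩
    omega

end HS

namespace HS

lemma sInf_eq_of (S : Set ℕ) (q : ℕ) (h1 : q ∈ S) (h2 : ∀ k, k < q → k ∉ S) :
    sInf S = q := by
  have hne : S.Nonempty := ⟨q, h1⟩
  have hle : sInf S ≤ q := Nat.sInf_le h1
  rcases lt_or_eq_of_le hle with h | h
  · exact absurd (Nat.sInf_mem hne) (h2 _ h)
  · exact h

lemma fl_zero : fl 0 = 0 := by simp [fl]

lemma fl_pos (m : ℕ) (hm : 1 ≤ m) : 1 ≤ fl m := by
  calc 1 = fl 1 := fl_one.symm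
    _ ≤ fl m := fl_mono.le_iff_le.mpr hm

/-- `Bv N` recovers `m - 1` from `N`, where `N = ⌊mφ⌋` or `N = ⌊mφ²⌋`. -/
noncomputable def Bv (N : ℕ) : ℕ := sInf {m | N = fl m ∨ N = m + fl m} - 1

lemma Bv_fl (m : ℕ) (hm : 1 ≤ m) : Bv (fl m) = m - 1 := by
  have h : sInf {k | fl m = fl k ∨ fl m = k + fl k} = m := by
    apply sInf_eq_of
    · exact Or.inl rfl
    · intro k hk hmem
      rcases hmem with h | h
      · exact absurd (fl_mono.injective h) (by omega)
      · rcases Nat.eq_zero_or_pos k with rfl | hk1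
        · have h0 : fl 0 = 0 := fl_zero
          have := fl_pos m hm; omega
        · exact beatty_disj m k hm hk1 h
  rw [Bv, h]

lemma Bv_g (m : ℕ) (hm : 1 ≤ m) : Bv (m + fl m) = m - 1 := by
  have h : sInf {k | m + fl m = fl k ∨ m + fl m = k + fl k} = m := by
    apply sInf_eq_of
    · exact Or.inr rfl
    · intro k hk hmem
      rcases hmem with h | h
      · rcases Nat.eq_zero_or_pos k with rfl | hk1
        · have h0 : fl 0 = 0 := fl_zero
          omega
        · exact beatty_disj k m hk1 hm h.symm
      · have := fl_mono hk
        omega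
  rw [Bv, h]

/-- Closed form for row `n` of the Hurt-Sada array. -/
noncomputable def B (n j : ℕ) : ℕ :=
  if j + n + 2 < fl (n + 2) then j
  else if fl (n + 1) ≤ j then j
  else Bv (j + n + 2)

lemma B_head (n j : ℕ) (h : j + n + 2 < fl (n + 2)) : B n j = j := by
  unfold B; rw [if_pos h]

lemma B_tail (n j : ℕ) (h1 : ¬(j + n + 2 < fl (n + 2))) (h2 : fl (n + 1) ≤ j) :
    B n j = j := by
  unfold B; rw [if_neg h1, if_pos h2]

lemma B_win (n j : ℕ) (h1 : ¬(j + n + 2 < fl (n + 2))) (h2 : ¬fl (n + 1) ≤ j) :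
    B n j = Bv (j + n + 2) := by
  unfold B; rw [if_neg h1, if_neg h2]

lemma S1 (n q : ℕ) (hq : q + (n + 2) = fl (n + 2)) (h : fl (n + 2) + 2 ≤ fl (n + 3)) :
    fl (q + 1) = n + 2 := by
  have hq' : (q : ℝ) + (n + 2) = fl (n + 2) := by exact_mod_cast hq
  have h' : (fl (n + 2) : ℝ) + 2 ≤ fl (n + 3) := by exact_mod_cast h
  have h1 : ((n + 2 : ℕ) : ℝ) * phi < fl (n + 2) + 1 := lt_fl_add_one (n + 2)
  have h2 : (fl (n + 3) : ℝ) < ((n + 3 : ℕ) : ℝ) * phi := fl_lt (n + 3) (by omega)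
  push_cast at h1 h2
  have e1 : ((n : ℝ) + 2) * (phi - 1) < (q : ℝ) + 1 := by nlinarith
  have e2 : (q : ℝ) + 1 < ((n : ℝ) + 3) * (phi - 1) := by nlinarith
  rw [fl, Nat.floor_eq_iff (mul_nonneg (Nat.cast_nonneg _) phi_pos.le)]
  constructor
  · push_cast
    nlinarith [mul_lt_mul_of_pos_right e1 phi_pos, phi_sq]
  · push_cast
    nlinarith [mul_lt_mul_of_pos_right e2 phi_pos, phi_sq]

lemma S2 (n j : ℕ) (h1 : fl (n + 1) ≤ j + 1) (h2 : j + 2 ≤ fl (n + 2)) :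
    fl (j + 2) = j + n + 3 := by
  have h1' : (fl (n + 1) : ℝ) ≤ (j : ℝ) + 1 := by exact_mod_cast h1
  have h2' : (j : ℝ) + 2 ≤ (fl (n + 2) : ℝ) := by exact_mod_cast h2
  have a1 : ((n + 1 : ℕ) : ℝ) * phi < fl (n + 1) + 1 := lt_fl_add_one (n + 1)
  have a2 : (fl (n + 2) : ℝ) < ((n + 2 : ℕ) : ℝ) * phi := fl_lt (n + 2) (by omega)
  push_cast at a1 a2
  have e1 : ((n : ℝ) + 1) * phi < (j : ℝ) + 2 := by linarith
  have e2 : (j : ℝ) + 2 < ((n : ℝ) + 2) * phi := by linarith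
  have hphi1 : (0 : ℝ) < phi - 1 := by nlinarith [one_lt_phi]
  rw [fl, Nat.floor_eq_iff (mul_nonneg (Nat.cast_nonneg _) phi_pos.le)]
  constructor
  · push_cast
    nlinarith [mul_lt_mul_of_pos_right e1 hphi1, phi_sq]
  · push_cast
    nlinarith [mul_lt_mul_of_pos_right e2 hphi1, phi_sq]

lemma sInf_row (n q : ℕ) (hq : q + (n + 2) = fl (n + 2))
    (hAB : ∀ j, A n j = B n j) : sInf {i | A n i = n + 1} = q := by
  have hub : fl (n + 2) < 2 * (n + 2) := fl_ub (n + 2) (by omega)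
  have hstep2 : fl (n + 2) ≤ fl (n + 1) + 2 := fl_le_add_two (n + 1)
  apply sInf_eq_of
  · show A n q = n + 1
    rw [hAB q]
    by_cases htail : fl (n + 1) ≤ q
    · have hn0 : n = 0 := by omega
      subst hn0
      have h2 : fl (0 + 2) = 3 := fl_two
      have h1 : fl (0 + 1) = 1 := fl_one
      rw [B_tail 0 q (by omega) htail]
      omega
    · rw [B_win n q (by omega) htail]
      have e : q + n + 2 = fl (n + 2) := by omega
      rw [e, Bv_fl (n + 2) (by omega)]
      omega
  · intro k hk hmem
    have hmem' : A n k = n + 1 := hmem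
    rw [hAB k, B_head n k (by omega)] at hmem'
    omega

lemma A_eq_B : ∀ n j, A n j = B n j := by
  intro n
  induction n with
  | zero =>
    intro j
    have h2 : fl (0 + 2) = 3 := fl_two
    have h1 : fl (0 + 1) = 1 := fl_one
    rw [show A 0 j = j from rfl]
    unfold B
    split_ifs with ha hb
    · omega
    · rfl
    · omega
  | succ n ih =>
    intro j
    have hlb : n + 3 ≤ fl (n + 2) := fl_lb (n + 2) (by omega)
    obtain ⟨q, hq⟩ : ∃ q, q + (n + 2) = fl (n + 2) := ⟨fl (n + 2) - (n + 2), by omega⟩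
    have hub : fl (n + 2) < 2 * (n + 2) := fl_ub (n + 2) (by omega)
    have hstep1 : fl (n + 1) + 1 ≤ fl (n + 2) := fl_add_one_le (n + 1)
    have hstep2 : fl (n + 2) ≤ fl (n + 1) + 2 := fl_le_add_two (n + 1)
    have hstep3 : fl (n + 3) ≤ fl (n + 2) + 2 := fl_le_add_two (n + 2)
    have hstep4 : fl (n + 2) + 1 ≤ fl (n + 3) := fl_add_one_le (n + 2)
    have er1 : fl (n + 1 + 2) = fl (n + 3) := rfl
    have er2 : fl (n + 1 + 1) = fl (n + 2) := rfl
    have hsinf : sInf {i | A n i = n + 1} = q := sInf_row n q hq ih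
    have hA : A (n + 1) j = if j < q then A n j
        else if j < q + (n + 1) then A n (j + 1)
        else if j = q + (n + 1) then n + 1 else A n j := by
      conv_lhs => rw [A]
      rw [hsinf]
    rw [hA]
    by_cases h1 : j < q
    · rw [if_pos h1, ih j, B_head n j (by omega),
        B_head (n + 1) j (by omega)]
    · rw [if_neg h1]
      by_cases h2 : j < q + (n + 1)
      · rw [if_pos h2, ih (j + 1)]
        by_cases hhead : j + n + 3 < fl (n + 3)
        · -- case 2a : j = q and the gap is 2
          have hj : j = q := by omega
          subst hj
          rcases Nat.eq_zero_or_pos n with rfl | hn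
          · exfalso
            have e3 : fl (0 + 2) = 3 := fl_two
            have e4 : fl (0 + 3) = 4 := fl_three
            omega
          · have hS1 : fl (j + 1) = n + 2 := S1 n j hq (by omega)
            have hnt : ¬fl (n + 1) ≤ j + 1 := by
              rcases Nat.lt_or_ge n 2 with hlt | hge
              · have hn1 : n = 1 := by omega
                subst hn1
                have e3 : fl (1 + 2) = 4 := fl_three
                have e4 : fl (1 + 1) = 3 := fl_two
                omega
              · omega
            rw [B_win n (j + 1) (by omega) hnt,
              B_head (n + 1) j (by omega)]
            have e : j + 1 + n + 2 = (j + 1) + fl (j + 1) := by omega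
            rw [e, Bv_g (j + 1) (by omega)]
            omega
        · -- case 2b
          have e2 : B (n + 1) j = Bv (j + (n + 1) + 2) :=
            B_win (n + 1) j (by omega) (by omega)
          by_cases htail : fl (n + 1) ≤ j + 1
          · have hS2 : fl (j + 2) = j + n + 3 := S2 n j htail (by omega)
            rw [B_tail n (j + 1) (by omega) htail, e2]
            have e : j + (n + 1) + 2 = fl (j + 2) := by omega
            rw [e, Bv_fl (j + 2) (by omega)]
            omega
          · rw [B_win n (j + 1) (by omega) htail, e2]
            congr 1
            omega
      · rw [if_neg h2]
        by_cases h3 : j = q + (n + 1)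
        · rw [if_pos h3, B_win (n + 1) j (by omega) (by omega)]
          have e : j + (n + 1) + 2 = (n + 2) + fl (n + 2) := by omega
          rw [e, Bv_g (n + 2) (by omega)]
          omega
        · rw [if_neg h3, ih j,
            B_tail n j (by omega) (by omega),
            B_tail (n + 1) j (by omega) (by omega)]

end HS

theorem last_jumped_formula (n : ℕ) (hn : 1 ≤ n) :
    t n = ⌊((n : ℝ) + 1) * phi⌋₊ - 1 := by
  open HS in
  obtain ⟨k, rfl⟩ : ∃ k, n = k + 1 := ⟨n - 1, by omega⟩
  have hlb : k + 3 ≤ HS.fl (k + 2) := HS.fl_lb (k + 2) (by omega)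
  obtain ⟨q, hq⟩ : ∃ q, q + (k + 2) = HS.fl (k + 2) := ⟨HS.fl (k + 2) - (k + 2), by omega⟩
  have hstep1 : HS.fl (k + 1) + 1 ≤ HS.fl (k + 2) := HS.fl_add_one_le (k + 1)
  have hp : p (k + 1) = q := by
    show sInf {i | A (k + 1 - 1) i = k + 1} = q
    have e : k + 1 - 1 = k := rfl
    rw [e]
    exact HS.sInf_row k q hq (HS.A_eq_B k)
  have ht : t (k + 1) = A k (q + (k + 1)) := by
    show A (k + 1 - 1) (p (k + 1) + (k + 1)) = _
    rw [hp]
    rfl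
  rw [ht, HS.A_eq_B k, HS.B_tail k (q + (k + 1)) (by omega) (by omega)]
  have e : ⌊(((k + 1 : ℕ) : ℝ) + 1) * phi⌋₊ = HS.fl (k + 2) := by
    rw [HS.fl]
    congr 1
    push_cast
    ring
  rw [e]
  omega
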